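/- Let p, q be distinct primes, d ≥ 2 a natural number, r : (ZMod q)^l → ZMod p a function, and m ∈ ({0,...,p−1})^k \ {0} an exponent vector whose total degree u is congruent to d modulo p−1. Then the induced function of the monomial r·x^m (the function ((ZMod p)^s × (ZMod q)^s) → ZMod p × ZMod q given by (x,y) ↦ (r(y₁,...,y_l)·x^m, 0)) lies in the clone generated by the induced function of r·x₁⋯x_d together with the linear operations of ZMod p × ZMod q. -/

import Mathlib

-- pow congruence in ZMod p
lemma aux_pow_eq_pow {p : ℕ} (hp : p.Prime) (z : ZMod p) {a b : ℕ}
    (ha : 1 ≤ a) (hb : 1 ≤ b) (h : a ≡ b [MOD p - 1]) : z ^ a = z ^ b := by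
  haveI : Fact p.Prime := ⟨hp⟩
  have main : ∀ a b : ℕ, 1 ≤ a → a ≤ b → a ≡ b [MOD p - 1] → z ^ a = z ^ b := by
    intro a b ha hab h
    obtain ⟨t, ht⟩ := (Nat.modEq_iff_dvd' hab).mp h
    have hb' : b = a + (p - 1) * t := by omega
    subst hb'
    rcases eq_or_ne z 0 with rfl | hz
    · rw [zero_pow (by omega), zero_pow (by omega)]
    · rw [pow_add, pow_mul, ZMod.pow_card_sub_one_eq_one hz, one_pow, mul_one]
  rcases le_total a b with hab | hab
  · exact main a b ha hab h
  · exact (main b a hb hab h.symm).symm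

-- enumeration of a monomial as a plain product
lemma aux_exists_enum {s N : ℕ} (n : Fin s → ℕ) (h : ∑ i, n i = N) :
    ∃ c : Fin N → Fin s, ∀ {M : Type} [CommMonoid M] (g : Fin s → M),
      ∏ j, g (c j) = ∏ i, g i ^ n i := by
  classical
  set L : List (Fin s) := (List.finRange s).flatMap (fun i => List.replicate (n i) i) with hL
  have hlen : L.length = N := by
    rw [hL, List.length_flatMap]
    rw [show (fun i : Fin s => (List.replicate (n i) i).length) = n from
      funext (fun i => List.length_replicate), ← Fin.sum_univ_def, h]
  refine ⟨fun j => L.get (Fin.cast hlen.symm j), ?_⟩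
  intro M _ g
  have h1 : ∏ j : Fin N, g (L.get (Fin.cast hlen.symm j))
      = ∏ j : Fin L.length, g (L.get j) :=
    Fintype.prod_equiv (finCongr hlen.symm) _ _ (fun j => rfl)
  rw [h1, ← List.prod_ofFn,
    show (List.ofFn fun j => g (L.get j)) = L.map g by
      conv_rhs => rw [← List.ofFn_get L, List.map_ofFn]
      rfl]
  simp only [hL, List.flatMap, List.map_flatten, List.prod_flatten, List.map_map,
    Function.comp_def, List.map_replicate, List.prod_replicate]
  rw [← Fin.prod_univ_def]

-- restrict a product over Fin s to a product over Fin k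
lemma aux_prod_castLE {M : Type*} [CommMonoid M] {k s : ℕ} (hk : k ≤ s) (v : Fin s → M)
    (hv : ∀ i : Fin s, ¬ (i : ℕ) < k → v i = 1) :
    ∏ i : Fin s, v i = ∏ j : Fin k, v (Fin.castLE hk j) := by
  classical
  have hmap : ∏ i ∈ (Finset.univ : Finset (Fin k)).map (Fin.castLEEmb hk), v i
      = ∏ j : Fin k, v (Fin.castLE hk j) := Finset.prod_map _ _ _
  rw [← hmap]
  refine (Finset.prod_subset (Finset.subset_univ _) ?_).symm
  intro i _ hi
  refine hv i (fun hlt => hi ?_)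
  exact Finset.mem_map.mpr ⟨⟨i, hlt⟩, Finset.mem_univ _, Fin.ext rfl⟩

/-- A clone on a set `A`. -/
def IsClone {A : Type*} (C : ∀ n : ℕ, Set ((Fin n → A) → A)) : Prop :=
  (∀ (n : ℕ) (i : Fin n), (fun x => x i) ∈ C n) ∧
  ∀ (n m : ℕ) (f : (Fin n → A) → A) (g : Fin n → (Fin m → A) → A),
    f ∈ C n → (∀ i, g i ∈ C m) → (fun x => f (fun i => g i x)) ∈ C m

set_option maxHeartbeats 1000000 in
theorem induced_monomial_generated (p q : ℕ) (hp : p.Prime) (hq : q.Prime) (hpq : p ≠ q)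
    (d : ℕ) (hd2 : 2 ≤ d) (l k s : ℕ)
    (r : (Fin l → ZMod q) → ZMod p)
    (m : Fin k → ℕ) (hmb : ∀ i, m i ≤ p - 1) (hm0 : ∃ i, m i ≠ 0)
    (hu : (∑ i, m i) ≡ d [MOD p - 1])
    (hk : k ≤ s) (hl : l ≤ s) (hds : d ≤ s)
    (C : ∀ n : ℕ, Set ((Fin n → ZMod p × ZMod q) → ZMod p × ZMod q))
    (hC : IsClone C)
    (hlin : ∀ (n : ℕ) (a : Fin n → ZMod p) (b : Fin n → ZMod q),
      (fun x : Fin n → ZMod p × ZMod q =>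
        ((∑ i, a i * (x i).1, ∑ i, b i * (x i).2) : ZMod p × ZMod q)) ∈ C n)
    (hgen : (fun x : Fin s → ZMod p × ZMod q =>
        ((r (fun i => (x (Fin.castLE hl i)).2) * ∏ i : Fin d, (x (Fin.castLE hds i)).1, 0)
          : ZMod p × ZMod q)) ∈ C s) :
    (fun x : Fin s → ZMod p × ZMod q =>
        ((r (fun i => (x (Fin.castLE hl i)).2) *
            ∏ i : Fin k, (x (Fin.castLE hk i)).1 ^ m i, 0) : ZMod p × ZMod q)) ∈ C s := by
  classical
  have hp2 : 2 ≤ p := hp.two_le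
  set R : (Fin s → ZMod p × ZMod q) → ZMod p :=
    fun x => r (fun i => (x (Fin.castLE hl i)).2) with hR
  -- coordinate functions paired with arbitrary second component
  have coordPair : ∀ cc j : Fin s,
      (fun x : Fin s → ZMod p × ZMod q => (((x cc).1, (x j).2) : ZMod p × ZMod q)) ∈ C s := by
    intro cc j
    have := hlin s (fun i => if i = cc then 1 else 0) (fun i => if i = j then 1 else 0)
    simpa [ite_mul, Finset.sum_ite_eq'] using this
  have coordGood : ∀ cc : Fin s,
      (fun x : Fin s → ZMod p × ZMod q => (((x cc).1, 0) : ZMod p × ZMod q)) ∈ C s := by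
    intro cc
    have := hlin s (fun i => if i = cc then 1 else 0) (fun _ => 0)
    simpa [ite_mul, Finset.sum_ite_eq'] using this
  -- pairing a good function with a second component variable
  have pairGood : ∀ (F : (Fin s → ZMod p × ZMod q) → ZMod p) (j : Fin s),
      ((fun x => ((F x, 0) : ZMod p × ZMod q)) ∈ C s) →
      (fun x : Fin s → ZMod p × ZMod q => ((F x, (x j).2) : ZMod p × ZMod q)) ∈ C s := by
    intro F j hF
    have hf2 := hlin 2 ![1, 0] ![0, 1]
    have hmem : ∀ i : Fin 2,
        (if i = 0 then (fun x : Fin s → ZMod p × ZMod q => ((F x, 0) : ZMod p × ZMod q))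
          else fun x => x j) ∈ C s := by
      intro i
      by_cases h : i = 0
      · simpa [h] using hF
      · simpa [h] using hC.1 s j
    have := hC.2 2 s _ _ hf2 hmem
    simpa [Fin.sum_univ_two] using this
  -- write d = d' + 1
  obtain ⟨d', rfl⟩ : ∃ d', d = d' + 1 := ⟨d - 1, by omega⟩
  -- the basic composition operation
  have opG : ∀ (F : Fin (d' + 1) → (Fin s → ZMod p × ZMod q) → ZMod p),
      (∀ i, (fun x => ((F i x, 0) : ZMod p × ZMod q)) ∈ C s) →
      (fun x : Fin s → ZMod p × ZMod q =>
        ((R x * ∏ i, F i x, 0) : ZMod p × ZMod q)) ∈ C s := by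
    intro F hF
    set g : Fin s → (Fin s → ZMod p × ZMod q) → ZMod p × ZMod q :=
      fun j => if h : (j : ℕ) < d' + 1 then (fun x => (F ⟨j, h⟩ x, (x j).2))
        else (fun x => ((x j).1, (x j).2)) with hg
    have hgmem : ∀ j, g j ∈ C s := by
      intro j
      rw [hg]
      dsimp only
      split
      · exact pairGood _ j (hF _)
      · exact coordPair j j
    have hg2 : ∀ (j : Fin s) x, (g j x).2 = (x j).2 := by
      intro j x
      rw [hg]
      dsimp only
      split <;> rfl
    have hg1 : ∀ (i : Fin (d' + 1)) x, (g (Fin.castLE hds i) x).1 = F i x := by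
      intro i x
      rw [hg]
      dsimp only
      rw [dif_pos (show ((Fin.castLE hds i : Fin s) : ℕ) < d' + 1 from i.isLt)]
      exact congrFun (congrArg F (Fin.ext rfl)) x
    have hcomp := hC.2 s s _ g hgen hgmem
    have heq : (fun x : Fin s → ZMod p × ZMod q =>
        ((R x * ∏ i, F i x, 0) : ZMod p × ZMod q))
        = (fun x : Fin s → ZMod p × ZMod q =>
          (fun z : Fin s → ZMod p × ZMod q =>
            ((r (fun i => (z (Fin.castLE hl i)).2) *
              ∏ i : Fin (d' + 1), (z (Fin.castLE hds i)).1, 0) : ZMod p × ZMod q))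
            (fun i => g i x)) := by
      funext x
      simp only [hg1, hg2, hR]
    rw [heq]
    exact hcomp
  -- the key inductive construction
  have key : ∀ (a : ℕ) (c : Fin (d' * a + 1) → Fin s),
      (fun x : Fin s → ZMod p × ZMod q =>
        ((R x ^ a * ∏ j, (x (c j)).1, 0) : ZMod p × ZMod q)) ∈ C s := by
    intro a
    induction a with
    | zero =>
      intro c
      have h1 : (fun x : Fin s → ZMod p × ZMod q =>
          ((R x ^ 0 * ∏ j : Fin (d' * 0 + 1), (x (c j)).1, 0) : ZMod p × ZMod q))
          = fun x => (((x (c 0)).1, 0) : ZMod p × ZMod q) := by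
        funext x
        simp
      rw [h1]
      exact coordGood (c 0)
    | succ a ih =>
      intro c
      have hcast : d' * (a + 1) + 1 = (d' * a + 1) + d' := by ring
      set c' : Fin ((d' * a + 1) + d') → Fin s := fun j => c (Fin.cast hcast.symm j) with hc'
      set F : Fin (d' + 1) → (Fin s → ZMod p × ZMod q) → ZMod p :=
        Fin.cases
          (fun x => R x ^ a * ∏ j : Fin (d' * a + 1), (x (c' (Fin.castAdd d' j))).1)
          (fun i' x => (x (c' (Fin.natAdd _ i'))).1) with hF
      have hFmem : ∀ i, (fun x => ((F i x, 0) : ZMod p × ZMod q)) ∈ C s := by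
        intro i
        induction i using Fin.cases with
        | zero => simpa [hF] using ih (fun j => c' (Fin.castAdd d' j))
        | succ i' => simpa [hF] using coordGood (c' (Fin.natAdd _ i'))
      have hmain := opG F hFmem
      have heq : (fun x : Fin s → ZMod p × ZMod q =>
          ((R x ^ (a + 1) * ∏ j, (x (c j)).1, 0) : ZMod p × ZMod q))
          = fun x => ((R x * ∏ i, F i x, 0) : ZMod p × ZMod q) := by
        funext x
        have h1 : (∏ i, F i x)
            = (R x ^ a * ∏ j : Fin (d' * a + 1), (x (c' (Fin.castAdd d' j))).1) *
              ∏ i' : Fin d', (x (c' (Fin.natAdd _ i'))).1 := by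
          rw [Fin.prod_univ_succ]
          simp [hF]
        have h2 : (∏ j : Fin (d' * (a + 1) + 1), (x (c j)).1)
            = ∏ j : Fin ((d' * a + 1) + d'), (x (c' j)).1 :=
          Fintype.prod_equiv (finCongr hcast) _ _ (fun j => rfl)
        have h3 : (∏ j : Fin ((d' * a + 1) + d'), (x (c' j)).1)
            = (∏ j : Fin (d' * a + 1), (x (c' (Fin.castAdd d' j))).1) *
              ∏ i' : Fin d', (x (c' (Fin.natAdd _ i'))).1 := Fin.prod_univ_add _
        simp only [h1, h2, h3]
        ring_nf
      rw [heq]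
      exact hmain
  -- final assembly
  obtain ⟨i₀, hi₀⟩ := hm0
  set um := ∑ i, m i with hum
  have hum1 : 1 ≤ um := by
    have := Finset.single_le_sum (f := m) (fun i _ => Nat.zero_le _) (Finset.mem_univ i₀)
    omega
  have hp1 : 1 ≤ p - 1 := by omega
  have hd1 : 1 ≤ d' := by omega
  set a := 1 + (p - 1) * um with ha
  set u := d' * a + 1 with huu
  have hueq : u = (d' + 1) + (p - 1) * (d' * um) := by rw [huu, ha]; ring
  have hu_ge : um ≤ u := by
    have h1 : um ≤ (p - 1) * (d' * um) := by
      calc um = 1 * (1 * um) := by ring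
      _ ≤ (p - 1) * (d' * um) :=
        Nat.mul_le_mul hp1 (Nat.mul_le_mul hd1 (le_refl um))
    omega
  have hmod_du : (d' + 1) ≡ u [MOD p - 1] :=
    (Nat.modEq_iff_dvd' (by omega)).mpr ⟨d' * um, by omega⟩
  have hmod_umu : um ≡ u [MOD p - 1] := hu.trans hmod_du
  have hdvd : (p - 1) ∣ u - um := (Nat.modEq_iff_dvd' hu_ge).mp hmod_umu
  set i₀' : Fin s := Fin.castLE hk i₀ with hi₀'
  set n : Fin s → ℕ := fun i =>
    (if h : (i : ℕ) < k then m ⟨i, h⟩ else 0) + (if i = i₀' then u - um else 0) with hn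
  -- sum of n
  have hsum_dite : ∑ i : Fin s, (if h : (i : ℕ) < k then m ⟨i, h⟩ else 0) = um := by
    rw [Fin.sum_univ_eq_sum_range (fun j => if h : j < k then m ⟨j, h⟩ else 0) s]
    rw [← Finset.sum_subset (Finset.range_subset_range.mpr hk)
      (fun j _ hj => dif_neg (by simpa using hj))]
    rw [← Fin.sum_univ_eq_sum_range (fun j => if h : j < k then m ⟨j, h⟩ else 0) k, hum]
    refine Finset.sum_congr rfl (fun i _ => ?_)
    rw [dif_pos i.isLt]
  have hsum_n : ∑ i, n i = u := by
    rw [hn, Finset.sum_add_distrib, hsum_dite, Finset.sum_ite_eq' Finset.univ i₀'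
      (fun _ => u - um)]
    simp only [Finset.mem_univ, if_true]
    omega
  obtain ⟨c, hc⟩ := aux_exists_enum n (by rw [hsum_n, huu])
  have hkey := key a c
  have ha1 : 1 ≤ a := by omega
  have hamod : a ≡ 1 [MOD p - 1] :=
    ((Nat.modEq_iff_dvd' (by omega)).mpr ⟨um, by omega⟩).symm
  have heqfin : (fun x : Fin s → ZMod p × ZMod q =>
      ((R x ^ a * ∏ j, (x (c j)).1, 0) : ZMod p × ZMod q))
      = (fun x : Fin s → ZMod p × ZMod q =>
        ((r (fun i => (x (Fin.castLE hl i)).2) *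
          ∏ i : Fin k, (x (Fin.castLE hk i)).1 ^ m i, 0) : ZMod p × ZMod q)) := by
    funext x
    have hRa : R x ^ a = R x := by
      have := aux_pow_eq_pow hp (R x) ha1 le_rfl hamod
      simpa using this
    have hprod : (∏ j, (x (c j)).1) = ∏ i : Fin s, (x i).1 ^ n i := hc (fun i => (x i).1)
    have hrestrict : (∏ i : Fin s, (x i).1 ^ n i)
        = ∏ j : Fin k, (x (Fin.castLE hk j)).1 ^ n (Fin.castLE hk j) := by
      refine aux_prod_castLE hk _ (fun i hik => ?_)
      have hne : i ≠ i₀' := by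
        intro hcon
        apply hik
        rw [hcon, hi₀']
        simpa using i₀.isLt
      rw [hn]
      dsimp only
      rw [dif_neg hik, if_neg hne, pow_zero]
    have hterm : ∀ j : Fin k,
        (x (Fin.castLE hk j)).1 ^ n (Fin.castLE hk j) = (x (Fin.castLE hk j)).1 ^ m j := by
      intro j
      have hjk : ((Fin.castLE hk j : Fin s) : ℕ) < k := j.isLt
      by_cases hj : j = i₀
      · subst hj
        have hnval : n (Fin.castLE hk j) = m j + (u - um) := by
          rw [hn]
          dsimp only
          rw [dif_pos hjk, if_pos rfl]
          exact congrArg (· + (u - um)) (congrArg m (Fin.ext rfl))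
        rw [hnval]
        refine aux_pow_eq_pow hp _ (by omega) (by omega) ?_
        exact (Nat.ModEq.add_left (m j) ((Nat.modEq_zero_iff_dvd).mpr hdvd)).trans
          (by simp [Nat.ModEq])
      · have hne : Fin.castLE hk j ≠ i₀' := by
          rw [hi₀']
          intro hcon
          exact hj (Fin.castLE_injective hk hcon)
        have hnval : n (Fin.castLE hk j) = m j := by
          rw [hn]
          dsimp only
          rw [dif_pos hjk, if_neg hne, add_zero]
          exact congrArg m (Fin.ext rfl)
        rw [hnval]
    rw [hRa, hprod, hrestrict, Finset.prod_congr rfl (fun j _ => hterm j), hR]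
  rw [← heqfin]
  exact hkey
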